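/- The multi-lane CCA 𝓜𝓛 simulates the Update procedure with a linear time factor: for an M-lane road encoded as the configuration 𝒞 = (ω₀,…,ω_{M−1}) with ω_i = (c_i, copy, M, i, 0), applying the global transition function Δ* exactly 2M times yields Δ*^{2M}(𝒞) = (ω₀',…,ω_{M−1}') with ω_i' = (c_i', copy, M, i, 0) where (c₀',…,c_{M−1}') = Update(c₀,…,c_{M−1}). -/

import Mathlib

/-- One iteration (index `i`) of the sequential multi-lane `Update` procedure
(Algorithm 2): transfer of vehicles to adjacent lanes via the copy (`↣_L`,
`↣_R`) and erase (`∖`) operations, applying the single-lane global dynamics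
`δ*₍a,b₎` at the prescribed points. -/
def mlStep {Conf : Type*}
    (copyL copyR eraseOp : Conf → Conf → Conf) (δ01 δ11 δ10 : Conf → Conf)
    (M i : ℕ) (cs : ℕ → Conf) : ℕ → Conf :=
  if i = 0 then
    -- c₁ := c₀ ↣_R c₁ ; c₀ := c₀ ∖ c₁
    let a := Function.update cs 1 (copyR (cs 0) (cs 1))
    Function.update a 0 (eraseOp (a 0) (a 1))
  else if i < M - 1 then
    -- c_{i-1} := c_i ↣_L c_{i-1} ; c_i := c_i ∖ c_{i-1}
    let a := Function.update cs (i - 1) (copyL (cs i) (cs (i - 1)))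
    let b := Function.update a i (eraseOp (a i) (a (i - 1)))
    -- c_{i+1} := c_i ↣_R c_{i+1} ; c_i := c_i ∖ c_{i+1}
    let c := Function.update b (i + 1) (copyR (b i) (b (i + 1)))
    let d := Function.update c i (eraseOp (c i) (c (i + 1)))
    if i = 1 then Function.update d 0 (δ01 (d 0))
    else Function.update d (i - 1) (δ11 (d (i - 1)))
  else
    -- i = M-1
    let a := Function.update cs (M - 2) (copyL (cs (M - 1)) (cs (M - 2)))
    let b := Function.update a (M - 1) (eraseOp (a (M - 1)) (a (M - 2)))
    let c := Function.update b (M - 2) (δ11 (b (M - 2)))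
    Function.update c (M - 1) (δ10 (c (M - 1)))

/-- The full sequential multi-lane update (Algorithm 2), scanning the lanes
from the left-most (`0`) to the right-most (`M-1`). -/
def mlUpdate {Conf : Type*}
    (copyL copyR eraseOp : Conf → Conf → Conf) (δ01 δ11 δ10 : Conf → Conf)
    (M : ℕ) (cs : ℕ → Conf) : ℕ → Conf :=
  (List.range M).foldl (fun ds i => mlStep copyL copyR eraseOp δ01 δ11 δ10 M i ds) cs

namespace MLCCA

variable {Conf : Type*} (copyL copyR eraseOp : Conf → Conf → Conf) (δ01 δ11 δ10 : Conf → Conf)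

def outConf (m i j par : ℕ) (lc cc rc : Conf) : Conf :=
  if par = 0 then
    if i = 0 then (if j = 1 then copyR lc cc else cc)
    else if i < m - 1 then
      if j = i - 1 then copyL rc cc
      else if j = i then eraseOp cc (copyL cc lc)
      else cc
    else
      if j = m - 2 then copyL rc cc
      else if j = m - 1 then eraseOp cc (copyL cc lc)
      else cc
  else
    if i = 0 then (if j = 0 then eraseOp cc rc else cc)
    else if i < m - 1 then
      if j = i + 1 then copyR lc cc
      else if j = i then eraseOp cc (copyR cc rc)
      else if j = i - 1 then (if i = 1 then δ01 cc else δ11 cc)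
      else cc
    else
      if j = m - 2 then δ11 cc
      else if j = m - 1 then δ10 cc
      else cc

def mlNext (m t : ℕ) (g : ℕ → Conf) (j : ℕ) : Conf :=
  outConf copyL copyR eraseOp δ01 δ11 δ10 m (t / 2) j (t % 2) (g (j - 1)) (g j)
    (if j + 1 < m then g (j + 1) else g j)

lemma mlNext_congr (m t : ℕ) {g g' : ℕ → Conf} (h : ∀ j < m, g j = g' j) :
    ∀ j < m, mlNext copyL copyR eraseOp δ01 δ11 δ10 m t g j
      = mlNext copyL copyR eraseOp δ01 δ11 δ10 m t g' j := by
  intro j hj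
  unfold mlNext
  rw [h (j - 1) (by omega), h j hj]
  by_cases h1 : j + 1 < m
  · rw [if_pos h1, if_pos h1, h (j + 1) h1]
  · rw [if_neg h1, if_neg h1]

set_option maxHeartbeats 1000000 in
/-- the two CCA phases of step `i` implement `mlStep i`. -/
lemma two_phases {M : ℕ} (hM : 2 ≤ M) {i : ℕ} (hi : i < M) (u : ℕ → Conf) :
    ∀ j < M, mlNext copyL copyR eraseOp δ01 δ11 δ10 M (2 * i + 1)
        (mlNext copyL copyR eraseOp δ01 δ11 δ10 M (2 * i) u) j
      = mlStep copyL copyR eraseOp δ01 δ11 δ10 M i u j := by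
  have hd0 : (2 * i) / 2 = i := by omega
  have hm0 : (2 * i) % 2 = 0 := by omega
  have hd1 : (2 * i + 1) / 2 = i := by omega
  have hm1 : (2 * i + 1) % 2 = 1 := by omega
  set G : ℕ → Conf := mlNext copyL copyR eraseOp δ01 δ11 δ10 M (2 * i) u with hGdef
  have hG : ∀ j, G j = outConf copyL copyR eraseOp δ01 δ11 δ10 M i j 0
      (u (j - 1)) (u j) (if j + 1 < M then u (j + 1) else u j) := by
    intro j; rw [hGdef]; unfold mlNext; rw [hd0, hm0]
  intro j hj
  have hL : mlNext copyL copyR eraseOp δ01 δ11 δ10 M (2 * i + 1) G j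
      = outConf copyL copyR eraseOp δ01 δ11 δ10 M i j 1
        (G (j - 1)) (G j) (if j + 1 < M then G (j + 1) else G j) := by
    unfold mlNext; rw [hd1, hm1]
  rw [hL]
  rcases Nat.eq_zero_or_pos i with hi0 | hipos
  · -- case i = 0
    subst hi0
    have hG0 : G 0 = u 0 := by rw [hG]; unfold outConf; simp
    have hG1 : G 1 = copyR (u 0) (u 1) := by
      rw [hG]; unfold outConf
      rw [if_pos rfl, if_pos rfl, if_pos rfl]
    have hGo : ∀ k < M, k ≠ 1 → G k = u k := by
      intro k hk hk1
      rw [hG]; unfold outConf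
      rw [if_pos rfl, if_pos rfl, if_neg hk1]
    unfold outConf mlStep
    rw [if_neg (by omega : ¬ (1:ℕ) = 0), if_pos rfl, if_pos rfl]
    rcases Nat.eq_zero_or_pos j with hj0 | hjpos
    · subst hj0
      rw [if_pos rfl, if_pos (by omega : 0 + 1 < M), hG0, hG1]
      simp only [ite_apply, Function.update_apply]
      split_ifs <;> first | rfl | omega | exact (‹False›).elim | exact absurd trivial ‹_›
    · rw [if_neg (by omega : ¬ j = 0)]
      by_cases hj1 : j = 1
      · subst hj1
        rw [hG1]
        simp only [ite_apply, Function.update_apply]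
        split_ifs <;> first | rfl | omega | exact (‹False›).elim | exact absurd trivial ‹_›
      · rw [hGo j hj hj1]
        simp only [ite_apply, Function.update_apply]
        split_ifs <;> first | rfl | omega | exact (‹False›).elim | exact absurd trivial ‹_›
  · -- case i > 0
    by_cases hilt : i < M - 1
    · -- middle case 0 < i < M-1
      have hGm1 : G (i - 1) = copyL (u i) (u (i - 1)) := by
        rw [hG (i - 1)]; unfold outConf
        rw [if_pos rfl, if_neg (by omega : ¬ i = 0), if_pos hilt, if_pos rfl,
          (show i - 1 + 1 = i by omega), if_pos (show i < M by omega)]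
      have hGi : G i = eraseOp (u i) (copyL (u i) (u (i - 1))) := by
        rw [hG i]; unfold outConf
        rw [if_pos rfl, if_neg (by omega : ¬ i = 0), if_pos hilt,
          if_neg (by omega : ¬ i = i - 1), if_pos rfl]
      have hGo : ∀ k, k ≠ i - 1 → k ≠ i → G k = u k := by
        intro k h1 h2
        rw [hG k]; unfold outConf
        rw [if_pos rfl, if_neg (by omega : ¬ i = 0), if_pos hilt, if_neg h1, if_neg h2]
      unfold outConf
      rw [if_neg (by omega : ¬ (1:ℕ) = 0), if_neg (by omega : ¬ i = 0), if_pos hilt]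
      rcases (by omega : i + 1 = j ∨ i = j ∨ i - 1 = j ∨ (j ≠ i + 1 ∧ j ≠ i ∧ j ≠ i - 1))
        with rfl | rfl | rfl | ⟨h1, h2, h3⟩
      · rw [if_pos rfl, (show i + 1 - 1 = i by omega), hGi,
          hGo (i + 1) (by omega) (by omega)]
        unfold mlStep
        rw [if_neg (by omega : ¬ i = 0), if_pos hilt]
        simp only [ite_apply, Function.update_apply]
        split_ifs <;> first | rfl | omega | exact (‹False›).elim | exact absurd trivial ‹_›
      ·
        rw [if_neg (by omega : ¬ i = i + 1), if_pos rfl,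
          if_pos (show i + 1 < M by omega), hGi, hGo (i + 1) (by omega) (by omega)]
        unfold mlStep
        rw [if_neg (by omega : ¬ i = 0), if_pos hilt]
        simp only [ite_apply, Function.update_apply]
        split_ifs <;> first | rfl | omega | exact (‹False›).elim | exact absurd trivial ‹_›
      · rw [if_neg (by omega : ¬ i - 1 = i + 1), if_neg (by omega : ¬ i - 1 = i),
          if_pos rfl, hGm1]
        unfold mlStep
        rw [if_neg (by omega : ¬ i = 0), if_pos hilt]
        simp only [ite_apply, Function.update_apply]
        split_ifs <;> first | rfl | omega | exact (‹False›).elim | exact absurd trivial ‹_›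
      · rw [if_neg h1, if_neg h2, if_neg h3, hGo j h3 h2]
        unfold mlStep
        rw [if_neg (by omega : ¬ i = 0), if_pos hilt]
        simp only [ite_apply, Function.update_apply]
        split_ifs <;> first | rfl | omega | exact (‹False›).elim | exact absurd trivial ‹_›
    · -- last case i = M - 1
      have hGm2 : G (M - 2) = copyL (u (M - 1)) (u (M - 2)) := by
        rw [hG (M - 2)]; unfold outConf
        rw [if_pos rfl, if_neg (by omega : ¬ i = 0), if_neg hilt, if_pos rfl,
          (show M - 2 + 1 = M - 1 by omega), if_pos (show M - 1 < M by omega)]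
      have hGm1' : G (M - 1) = eraseOp (u (M - 1)) (copyL (u (M - 1)) (u (M - 2))) := by
        rw [hG (M - 1)]; unfold outConf
        rw [if_pos rfl, if_neg (by omega : ¬ i = 0), if_neg hilt,
          if_neg (by omega : ¬ M - 1 = M - 2), if_pos rfl,
          (show M - 1 - 1 = M - 2 by omega)]
      have hGo : ∀ k, k ≠ M - 2 → k ≠ M - 1 → G k = u k := by
        intro k h1 h2
        rw [hG k]; unfold outConf
        rw [if_pos rfl, if_neg (by omega : ¬ i = 0), if_neg hilt, if_neg h1, if_neg h2]
      unfold outConf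
      rw [if_neg (by omega : ¬ (1:ℕ) = 0), if_neg (by omega : ¬ i = 0), if_neg hilt]
      rcases (by omega : j = M - 2 ∨ j = M - 1 ∨ (j ≠ M - 2 ∧ j ≠ M - 1))
        with hc | hc | ⟨h1, h2⟩
      · subst hc
        rw [if_pos rfl, hGm2]
        unfold mlStep
        rw [if_neg (by omega : ¬ i = 0), if_neg hilt]
        simp only [ite_apply, Function.update_apply]
        split_ifs <;> first | rfl | omega | exact (‹False›).elim | exact absurd trivial ‹_›
      · subst hc
        rw [if_neg (by omega : ¬ M - 1 = M - 2), if_pos rfl, hGm1']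
        unfold mlStep
        rw [if_neg (by omega : ¬ i = 0), if_neg hilt]
        simp only [ite_apply, Function.update_apply]
        split_ifs <;> first | rfl | omega | exact (‹False›).elim | exact absurd trivial ‹_›
      · rw [if_neg h1, if_neg h2, hGo j h1 h2]
        unfold mlStep
        rw [if_neg (by omega : ¬ i = 0), if_neg hilt]
        simp only [ite_apply, Function.update_apply]
        split_ifs <;> first | rfl | omega | exact (‹False›).elim | exact absurd trivial ‹_›

def conft (m : ℕ) (cs : ℕ → Conf) : ℕ → ℕ → Conf
  | 0 => cs
  | t + 1 => mlNext copyL copyR eraseOp δ01 δ11 δ10 m t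
      (conft m cs t)

lemma conft_eval {M : ℕ} (hM : 2 ≤ M) (cs : ℕ → Conf) :
    ∀ i ≤ M, ∀ j < M, conft copyL copyR eraseOp δ01 δ11 δ10 M cs (2 * i) j
      = (List.range i).foldl
          (fun ds k => mlStep copyL copyR eraseOp δ01 δ11 δ10 M k ds) cs j := by
  intro i
  induction i with
  | zero => intro _ j _; simp [conft]
  | succ i ih =>
    intro hiM j hj
    have hii : i < M := by omega
    have hprev : ∀ k < M, conft copyL copyR eraseOp δ01 δ11 δ10 M cs (2 * i) k
        = (List.range i).foldl
            (fun ds k => mlStep copyL copyR eraseOp δ01 δ11 δ10 M k ds) cs k :=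
      ih (by omega)
    set u : ℕ → Conf := (List.range i).foldl
        (fun ds k => mlStep copyL copyR eraseOp δ01 δ11 δ10 M k ds) cs with hu
    have e1 : 2 * (i + 1) = (2 * i + 1) + 1 := by ring
    rw [e1]
    have e2 : conft copyL copyR eraseOp δ01 δ11 δ10 M cs ((2 * i + 1) + 1) j
        = mlNext copyL copyR eraseOp δ01 δ11 δ10 M (2 * i + 1)
            (conft copyL copyR eraseOp δ01 δ11 δ10 M cs (2 * i + 1)) j := rfl
    have e3 : ∀ k < M, conft copyL copyR eraseOp δ01 δ11 δ10 M cs (2 * i + 1) k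
        = mlNext copyL copyR eraseOp δ01 δ11 δ10 M (2 * i) u k := by
      intro k hk
      have : conft copyL copyR eraseOp δ01 δ11 δ10 M cs (2 * i + 1) k
          = mlNext copyL copyR eraseOp δ01 δ11 δ10 M (2 * i)
              (conft copyL copyR eraseOp δ01 δ11 δ10 M cs (2 * i)) k := rfl
      rw [this]
      exact mlNext_congr copyL copyR eraseOp δ01 δ11 δ10 M (2 * i) hprev k hk
    rw [e2, mlNext_congr copyL copyR eraseOp δ01 δ11 δ10 M (2 * i + 1) e3 j hj,
      two_phases copyL copyR eraseOp δ01 δ11 δ10 hM hii u j hj,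
      List.range_succ, List.foldl_append, List.foldl_cons, List.foldl_nil]

def getC (o : Option (Conf × Bool × ℕ × ℕ × ℕ)) (d : Conf) : Conf :=
  o.elim d (·.1)

/-- the local rule of the CCA `𝓜𝓛`. -/
def Dml : Option (Conf × Bool × ℕ × ℕ × ℕ) → Option (Conf × Bool × ℕ × ℕ × ℕ) →
    Option (Conf × Bool × ℕ × ℕ × ℕ) → Option (Conf × Bool × ℕ × ℕ × ℕ) :=
  fun l c r =>
    c.elim none (fun s =>
      some (outConf copyL copyR eraseOp δ01 δ11 δ10 s.2.2.1 (s.2.2.2.2 / 2)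
              s.2.2.2.1 (s.2.2.2.2 % 2) (getC l s.1) s.1 (getC r s.1),
            !s.2.1, s.2.2.1, s.2.2.2.1,
            if s.2.2.2.2 + 1 = 2 * s.2.2.1 then 0 else s.2.2.2.2 + 1))

/-- configuration of the CCA at time `t`. -/
def enc (M : ℕ) (cs : ℕ → Conf) (t : ℕ) : ℤ → Option (Conf × Bool × ℕ × ℕ × ℕ) :=
  fun z => if 0 ≤ z ∧ z < (M : ℤ) then
    some (conft copyL copyR eraseOp δ01 δ11 δ10 M cs t z.toNat,
          decide (t % 2 = 0), M, z.toNat, if t = 2 * M then 0 else t)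
  else none

lemma parity_step (t : ℕ) : decide ((t + 1) % 2 = 0) = !decide (t % 2 = 0) := by
  rcases Nat.mod_two_eq_zero_or_one t with h | h <;> simp [Nat.add_mod, h]

lemma step_enc {M : ℕ} (hM : 2 ≤ M) (cs : ℕ → Conf) {t : ℕ} (ht : t < 2 * M) :
    (fun z : ℤ => Dml copyL copyR eraseOp δ01 δ11 δ10
        (enc copyL copyR eraseOp δ01 δ11 δ10 M cs t (z - 1))
        (enc copyL copyR eraseOp δ01 δ11 δ10 M cs t z)
        (enc copyL copyR eraseOp δ01 δ11 δ10 M cs t (z + 1)))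
      = enc copyL copyR eraseOp δ01 δ11 δ10 M cs (t + 1) := by
  have hkt : (if t = 2 * M then 0 else t) = t := if_neg (by omega)
  funext z
  by_cases hz : 0 ≤ z ∧ z < (M : ℤ)
  · set g : ℕ → Conf := conft copyL copyR eraseOp δ01 δ11 δ10 M cs t with hg
    have hcen : enc copyL copyR eraseOp δ01 δ11 δ10 M cs t z
        = some (g z.toNat, decide (t % 2 = 0), M, z.toNat, t) := by
      rw [enc, if_pos hz, hkt]
    have hrhs : enc copyL copyR eraseOp δ01 δ11 δ10 M cs (t + 1) z
        = some (mlNext copyL copyR eraseOp δ01 δ11 δ10 M t g z.toNat,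
            decide ((t + 1) % 2 = 0), M, z.toNat, if t + 1 = 2 * M then 0 else t + 1) := by
      rw [enc, if_pos hz,
        show conft copyL copyR eraseOp δ01 δ11 δ10 M cs (t + 1)
          = mlNext copyL copyR eraseOp δ01 δ11 δ10 M t g from rfl]
    rw [hcen, hrhs]
    have hleft : getC (enc copyL copyR eraseOp δ01 δ11 δ10 M cs t (z - 1)) (g z.toNat)
        = g (z.toNat - 1) := by
      by_cases hz1 : 1 ≤ z
      · have : (0 ≤ z - 1 ∧ z - 1 < (M : ℤ)) := by omega
        rw [enc, if_pos this]
        have : (z - 1).toNat = z.toNat - 1 := by omega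
        simp [getC, this, hg]
      · have hz0 : z = 0 := by omega
        have : ¬ (0 ≤ z - 1 ∧ z - 1 < (M : ℤ)) := by omega
        rw [enc, if_neg this]
        subst hz0
        simp [getC]
    have hright : getC (enc copyL copyR eraseOp δ01 δ11 δ10 M cs t (z + 1)) (g z.toNat)
        = if z.toNat + 1 < M then g (z.toNat + 1) else g z.toNat := by
      by_cases hzr : z + 1 < (M : ℤ)
      · have h1 : (0 ≤ z + 1 ∧ z + 1 < (M : ℤ)) := by omega
        rw [enc, if_pos h1, if_pos (by omega : z.toNat + 1 < M)]
        have : (z + 1).toNat = z.toNat + 1 := by omega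
        simp [getC, this, hg]
      · have h1 : ¬ (0 ≤ z + 1 ∧ z + 1 < (M : ℤ)) := by omega
        rw [enc, if_neg h1, if_neg (by omega : ¬ z.toNat + 1 < M)]
        simp [getC]
    show Dml copyL copyR eraseOp δ01 δ11 δ10 _ (some _) _ = _
    rw [Dml]
    simp only [Option.elim_some]
    rw [hleft, hright, parity_step]
    rfl
  · rw [show enc copyL copyR eraseOp δ01 δ11 δ10 M cs t z = none from if_neg hz,
      show enc copyL copyR eraseOp δ01 δ11 δ10 M cs (t + 1) z = none from if_neg hz]
    rfl

lemma iter_enc {M : ℕ} (hM : 2 ≤ M) (cs : ℕ → Conf) :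
    ∀ n ≤ 2 * M,
      (fun f : ℤ → Option (Conf × Bool × ℕ × ℕ × ℕ) =>
          fun z : ℤ => Dml copyL copyR eraseOp δ01 δ11 δ10 (f (z - 1)) (f z) (f (z + 1)))^[n]
        (enc copyL copyR eraseOp δ01 δ11 δ10 M cs 0)
      = enc copyL copyR eraseOp δ01 δ11 δ10 M cs n := by
  intro n
  induction n with
  | zero => intro _; rfl
  | succ n ih =>
    intro hn
    rw [Function.iterate_succ_apply', ih (by omega)]
    exact step_enc copyL copyR eraseOp δ01 δ11 δ10 hM cs (by omega)

end MLCCA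

/-- there is a CCA `𝓜𝓛` with state set
`Ω = (Conf × {copy, erase} × ℕ³) ∪ {⊥}` and von Neumann neighborhood whose
global transition function `Δ*`, applied `2M` times to the encoding
`𝒞 = (ω₀,…,ω_{M−1})`, `ω_i = (c_i, copy, M, i, 0)`, yields the encoding of
`Update(c₀,…,c_{M−1})`. (`copy` is encoded as `true`.) -/
theorem multilane_CCA_simulates_update
    {Conf : Type*} (copyL copyR eraseOp : Conf → Conf → Conf)
    (δ01 δ11 δ10 : Conf → Conf) :
    ∃ Δ : Option (Conf × Bool × ℕ × ℕ × ℕ) → Option (Conf × Bool × ℕ × ℕ × ℕ) →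
          Option (Conf × Bool × ℕ × ℕ × ℕ) → Option (Conf × Bool × ℕ × ℕ × ℕ),
      Δ none none none = none ∧
      ∀ M : ℕ, 2 ≤ M → ∀ cs : ℕ → Conf,
        (fun f : ℤ → Option (Conf × Bool × ℕ × ℕ × ℕ) =>
            fun i : ℤ => Δ (f (i - 1)) (f i) (f (i + 1)))^[2 * M]
          (fun i : ℤ => if 0 ≤ i ∧ i < (M : ℤ) then
              some (cs i.toNat, true, M, i.toNat, 0) else none)
        = fun i : ℤ => if 0 ≤ i ∧ i < (M : ℤ) then
              some (mlUpdate copyL copyR eraseOp δ01 δ11 δ10 M cs i.toNat,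
                true, M, i.toNat, 0) else none := by

  refine ⟨MLCCA.Dml copyL copyR eraseOp δ01 δ11 δ10, rfl, ?_⟩
  intro M hM cs
  have hinit : (fun i : ℤ => if 0 ≤ i ∧ i < (M : ℤ) then
      some (cs i.toNat, true, M, i.toNat, 0) else none)
      = MLCCA.enc copyL copyR eraseOp δ01 δ11 δ10 M cs 0 := by
    funext z
    by_cases hz : 0 ≤ z ∧ z < (M : ℤ)
    · rw [MLCCA.enc, if_pos hz, if_pos hz, ite_self]
      rfl
    · rw [MLCCA.enc, if_neg hz, if_neg hz]
  rw [hinit, MLCCA.iter_enc copyL copyR eraseOp δ01 δ11 δ10 hM cs (2 * M) le_rfl]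
  funext z
  by_cases hz : 0 ≤ z ∧ z < (M : ℤ)
  · rw [MLCCA.enc, if_pos hz, if_pos hz,
      MLCCA.conft_eval copyL copyR eraseOp δ01 δ11 δ10 hM cs M le_rfl z.toNat (by omega),
      if_pos rfl, show decide ((2 * M) % 2 = 0) = true by simp [Nat.mul_mod_right]]
    rfl
  · rw [MLCCA.enc, if_neg hz, if_neg hz]
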